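/- With multiplication a·b = φ^{-1}(φ(a)·φ(b)), PIP_X is a monoid containing IP_X as a submonoid. -/

import Mathlib

/-- A subset of `X ⊕ X` (modelling `X ∪ X'`) is a *line* if it meets both halves. -/
def IsLine {X : Type*} (A : Set (X ⊕ X)) : Prop :=
  (∃ x, Sum.inl x ∈ A) ∧ (∃ x, Sum.inr x ∈ A)

/-- `IP X`: equivalence relations on `X ∪ X'` all of whose classes are lines,
i.e. the dual inverse symmetric monoid on `X` (elements viewed as partitions). -/
def IP (X : Type*) : Type _ :=
  {r : Setoid (X ⊕ X) // ∀ x : X ⊕ X, IsLine {y | r.r x y}}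

/-- Alternating chain condition through relations `r` (playing the role of `≡_a`)
and `s` (playing the role of `≡_b`): the list `c₁, c₂, …` of elements of `X`
satisfies `c₁ ≡_b c₂`, `c₂' ≡_a c₃'`, `c₃ ≡_b c₄`, … (when the flag is `true`;
flag `false` starts with an `a`-link on the primed side). -/
def AltChain {X : Type*} (r s : (X ⊕ X) → (X ⊕ X) → Prop) :
    Bool → List X → Prop
  | _, [] => True
  | _, [_] => True
  | true, x :: y :: l => s (Sum.inl x) (Sum.inl y) ∧ AltChain r s false (y :: l)
  | false, x :: y :: l => r (Sum.inr x) (Sum.inr y) ∧ AltChain r s true (y :: l)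

/-- The product relation `≡` of `a` and `b` on `X ∪ X'`, defined by the
alternating-chain conditions of the paper. -/
def prodRel {X : Type*} (r s : (X ⊕ X) → (X ⊕ X) → Prop) :
    (X ⊕ X) → (X ⊕ X) → Prop
  | Sum.inl x, Sum.inl y =>
      r (Sum.inl x) (Sum.inl y) ∨
      ∃ (c : X) (l : List X), (c :: l).length % 2 = 0 ∧
        r (Sum.inl x) (Sum.inr c) ∧ AltChain r s true (c :: l) ∧
        r (Sum.inr ((c :: l).getLast (List.cons_ne_nil c l))) (Sum.inl y)
  | Sum.inr x, Sum.inr y =>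
      s (Sum.inr x) (Sum.inr y) ∨
      ∃ (c : X) (l : List X), (c :: l).length % 2 = 0 ∧
        s (Sum.inr x) (Sum.inl c) ∧ AltChain r s false (c :: l) ∧
        s (Sum.inl ((c :: l).getLast (List.cons_ne_nil c l))) (Sum.inr y)
  | Sum.inl x, Sum.inr y =>
      ∃ (c : X) (l : List X), (c :: l).length % 2 = 1 ∧
        r (Sum.inl x) (Sum.inr c) ∧ AltChain r s true (c :: l) ∧
        s (Sum.inl ((c :: l).getLast (List.cons_ne_nil c l))) (Sum.inr y)
  | Sum.inr x, Sum.inl y =>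
      ∃ (c : X) (l : List X), (c :: l).length % 2 = 1 ∧
        r (Sum.inl y) (Sum.inr c) ∧ AltChain r s true (c :: l) ∧
        s (Sum.inl ((c :: l).getLast (List.cons_ne_nil c l))) (Sum.inr x)


/-- A subset of `X ⊕ X` is a *point* if it is a singleton. -/
def IsPoint {X : Type*} (A : Set (X ⊕ X)) : Prop :=
  ∃ z, A = {z}

/-- `PIP X`: equivalence relations on `X ∪ X'` all of whose classes are lines
or points. -/
def PIP (X : Type*) : Type _ :=
  {r : Setoid (X ⊕ X) // ∀ x : X ⊕ X, IsLine {y | r.r x y} ∨ IsPoint {y | r.r x y}}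

/-- `z` is a point of the relation `r`. -/
def IsPointOf {X : Type*} (r : (X ⊕ X) → (X ⊕ X) → Prop) (z : X ⊕ X) : Prop :=
  ∀ w, r z w → w = z

/-- Membership in the extra block of `φ a`. -/
def InExtraBlock {X : Type*} (r : (X ⊕ X) → (X ⊕ X) → Prop) :
    (Option X ⊕ Option X) → Prop
  | Sum.inl none => True
  | Sum.inr none => True
  | Sum.inl (some z) => IsPointOf r (Sum.inl z)
  | Sum.inr (some z) => IsPointOf r (Sum.inr z)

/-- The relation of `φ a`. -/
def phiRel {X : Type*} (r : (X ⊕ X) → (X ⊕ X) → Prop) :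
    (Option X ⊕ Option X) → (Option X ⊕ Option X) → Prop :=
  fun u v =>
    (∃ z w : X ⊕ X, u = Sum.map some some z ∧ v = Sum.map some some w ∧
        r z w ∧ ¬ IsPointOf r z) ∨
    (InExtraBlock r u ∧ InExtraBlock r v)


set_option linter.unusedVariables false
set_option linter.unnecessarySeqFocus false
open Relation Sum

section Defs2
variable {X : Type*}
abbrev SRel (X : Type*) := (X ⊕ X) → (X ⊕ X) → Prop
def Ulink (r s : SRel X) (c d : X) : Prop := s (inl c) (inl d) ∨ r (inr c) (inr d)
def Jrel (r s : SRel X) : X → X → Prop := ReflTransGen (Ulink r s)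
variable {r s : SRel X} {c d e : X}
lemma Jrel.of_s (h : s (inl c) (inl d)) : Jrel r s c d := ReflTransGen.single (Or.inl h)
lemma Jrel.of_r (h : r (inr c) (inr d)) : Jrel r s c d := ReflTransGen.single (Or.inr h)
lemma Jrel.rfl : Jrel r s c c := ReflTransGen.refl
lemma Jrel.trans (h : Jrel r s c d) (h' : Jrel r s d e) : Jrel r s c e := ReflTransGen.trans h h'
def cleanProd (r s : SRel X) : SRel X
  | inl x, inl y => r (inl x) (inl y) ∨
      ∃ c d, r (inl x) (inr c) ∧ Jrel r s c d ∧ r (inr d) (inl y)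
  | inl x, inr y => ∃ c d, r (inl x) (inr c) ∧ Jrel r s c d ∧ s (inl d) (inr y)
  | inr x, inl y => ∃ c d, r (inl y) (inr c) ∧ Jrel r s c d ∧ s (inl d) (inr x)
  | inr x, inr y => s (inr x) (inr y) ∨
      ∃ c d, s (inr x) (inl c) ∧ Jrel r s c d ∧ s (inl d) (inr y)
end Defs2

section CleanLemmas
variable {X : Type*} {r s : SRel X} {c d e : X}
lemma Jrel.symm (hr : Equivalence r) (hs : Equivalence s) (h : Jrel r s c d) : Jrel r s d c :=
  haveI : Std.Symm (Ulink r s) := ⟨fun _ _ h => h.imp hs.symm hr.symm⟩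
  (ReflTransGen.stdSymm (r := Ulink r s)).symm _ _ h

variable (hr : Equivalence r) (hs : Equivalence s)
include hr hs

lemma clean_refl : ∀ z, cleanProd r s z z
  | inl x => Or.inl (hr.refl _)
  | inr x => Or.inl (hs.refl _)

lemma clean_symm : ∀ {z w}, cleanProd r s z w → cleanProd r s w z
  | inl x, inl y, Or.inl h => Or.inl (hr.symm h)
  | inl x, inl y, Or.inr ⟨c, d, h1, h2, h3⟩ =>
      Or.inr ⟨d, c, hr.symm h3, h2.symm hr hs, hr.symm h1⟩
  | inl x, inr y, ⟨c, d, h1, h2, h3⟩ => ⟨c, d, h1, h2, h3⟩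
  | inr x, inl y, ⟨c, d, h1, h2, h3⟩ => ⟨c, d, h1, h2, h3⟩
  | inr x, inr y, Or.inl h => Or.inl (hs.symm h)
  | inr x, inr y, Or.inr ⟨c, d, h1, h2, h3⟩ =>
      Or.inr ⟨d, c, hs.symm h3, h2.symm hr hs, hs.symm h1⟩

lemma clean_trans : ∀ {u m v}, cleanProd r s u m → cleanProd r s m v → cleanProd r s u v
  | inl x, inl m, inl y, Or.inl h, Or.inl h' => Or.inl (hr.trans h h')
  | inl x, inl m, inl y, Or.inl h, Or.inr ⟨c, d, h1, h2, h3⟩ =>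
      Or.inr ⟨c, d, hr.trans h h1, h2, h3⟩
  | inl x, inl m, inl y, Or.inr ⟨c, d, h1, h2, h3⟩, Or.inl h' =>
      Or.inr ⟨c, d, h1, h2, hr.trans h3 h'⟩
  | inl x, inl m, inl y, Or.inr ⟨c, d, h1, h2, h3⟩, Or.inr ⟨c', d', h1', h2', h3'⟩ =>
      Or.inr ⟨c, d', h1, (h2.trans (Jrel.of_r (hr.trans h3 h1'))).trans h2', h3'⟩
  | inl x, inl m, inr y, Or.inl h, ⟨c, d, h1, h2, h3⟩ => ⟨c, d, hr.trans h h1, h2, h3⟩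
  | inl x, inl m, inr y, Or.inr ⟨c, d, h1, h2, h3⟩, ⟨c', d', h1', h2', h3'⟩ =>
      ⟨c, d', h1, (h2.trans (Jrel.of_r (hr.trans h3 h1'))).trans h2', h3'⟩
  | inl x, inr m, inl y, ⟨c, d, h1, h2, h3⟩, ⟨c', d', h1', h2', h3'⟩ =>
      Or.inr ⟨c, c', h1,
        ((h2.trans (Jrel.of_s (hs.trans h3 (hs.symm h3')))).trans (h2'.symm hr hs)),
        hr.symm h1'⟩
  | inl x, inr m, inr y, ⟨c, d, h1, h2, h3⟩, Or.inl h' => ⟨c, d, h1, h2, hs.trans h3 h'⟩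
  | inl x, inr m, inr y, ⟨c, d, h1, h2, h3⟩, Or.inr ⟨c', d', h1', h2', h3'⟩ =>
      ⟨c, d', h1, (h2.trans (Jrel.of_s (hs.trans h3 h1'))).trans h2', h3'⟩
  | inr x, inl m, inl y, ⟨c, d, h1, h2, h3⟩, Or.inl h' =>
      ⟨c, d, hr.trans (hr.symm h') h1, h2, h3⟩
  | inr x, inl m, inl y, ⟨c, d, h1, h2, h3⟩, Or.inr ⟨c', d', h1', h2', h3'⟩ =>
      ⟨d', d, hr.symm h3',
        (h2'.symm hr hs).trans ((Jrel.of_r (hr.trans (hr.symm h1') h1)).trans h2), h3⟩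
  | inr x, inl m, inr y, ⟨c, d, h1, h2, h3⟩, ⟨c', d', h1', h2', h3'⟩ =>
      Or.inr ⟨d, d', hs.symm h3, (h2.symm hr hs).trans ((Jrel.of_r (hr.trans (hr.symm h1) h1')).trans h2'),
        h3'⟩
  | inr x, inr m, inl y, Or.inl h, ⟨c', d', h1', h2', h3'⟩ =>
      ⟨c', d', h1', h2', hs.trans h3' (hs.symm h)⟩
  | inr x, inr m, inl y, Or.inr ⟨c, d, h1, h2, h3⟩, ⟨c', d', h1', h2', h3'⟩ =>
      ⟨c', c, h1', (h2'.trans (Jrel.of_s (hs.trans h3' (hs.symm h3)))).trans (h2.symm hr hs),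
        hs.symm h1⟩
  | inr x, inr m, inr y, Or.inl h, Or.inl h' => Or.inl (hs.trans h h')
  | inr x, inr m, inr y, Or.inl h, Or.inr ⟨c, d, h1, h2, h3⟩ =>
      Or.inr ⟨c, d, hs.trans h h1, h2, h3⟩
  | inr x, inr m, inr y, Or.inr ⟨c, d, h1, h2, h3⟩, Or.inl h' =>
      Or.inr ⟨c, d, h1, h2, hs.trans h3 h'⟩
  | inr x, inr m, inr y, Or.inr ⟨c, d, h1, h2, h3⟩, Or.inr ⟨c', d', h1', h2', h3'⟩ =>
      Or.inr ⟨c, d', h1, (h2.trans (Jrel.of_s (hs.trans h3 h1'))).trans h2', h3'⟩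

lemma clean_equiv : Equivalence (cleanProd r s) :=
  ⟨clean_refl hr hs, clean_symm hr hs, clean_trans hr hs⟩

end CleanLemmas


section Chains
variable {X : Type*} {r s : SRel X}

def linkF (r s : SRel X) : Bool → X → X → Prop
  | true, x, y => s (inl x) (inl y)
  | false, x, y => r (inr x) (inr y)

lemma altChain_cons_cons {f : Bool} {x y : X} {l : List X} :
    AltChain r s f (x :: y :: l) ↔ linkF r s f x y ∧ AltChain r s (!f) (y :: l) := by
  cases f <;> exact Iff.rfl

lemma linkF_refl (hr : Equivalence r) (hs : Equivalence s) (f : Bool) (x : X) :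
    linkF r s f x x := by
  cases f
  · exact hr.refl _
  · exact hs.refl _

lemma altChain_single {f : Bool} {x : X} : AltChain r s f [x] := by
  cases f <;> trivial

lemma altChain_nil {f : Bool} : AltChain r s f [] := by
  cases f <;> trivial

lemma altChain_getLast : ∀ (l : List X) (f : Bool) (c : X), AltChain r s f (c :: l) →
    Jrel r s c ((c :: l).getLast (List.cons_ne_nil c l))
  | [], f, c, _ => Jrel.rfl
  | d :: l, f, c, h => by
    rw [List.getLast_cons_cons]
    rw [altChain_cons_cons] at h
    refine Jrel.trans ?_ (altChain_getLast (l) (!f) d h.2)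
    cases f
    · exact Jrel.of_r h.1
    · exact Jrel.of_s h.1

def flagAfter (f : Bool) (l : List X) : Bool := if l.length % 2 = 1 then f else !f

lemma flagAfter_cons {f : Bool} {c d : X} {l : List X} :
    flagAfter f (c :: d :: l) = flagAfter (!f) (d :: l) := by
  unfold flagAfter
  rcases Nat.mod_two_eq_zero_or_one l.length with h | h <;>
    simp [List.length_cons, Nat.add_mod, h]

lemma altChain_append : ∀ (l : List X) (f : Bool) (c : X), AltChain r s f (c :: l) →
    ∀ (l₂ : List X),
      AltChain r s (flagAfter f (c :: l)) ((c :: l).getLast (List.cons_ne_nil c l) :: l₂) →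
    AltChain r s f (c :: l ++ l₂)
  | [], f, c, h, l₂, h₂ => by
    have hf : flagAfter f [c] = f := by simp [flagAfter]
    rw [hf] at h₂; simpa using h₂
  | d :: l, f, c, h, l₂, h₂ => by
    rw [altChain_cons_cons] at h
    rw [flagAfter_cons, List.getLast_cons_cons] at h₂
    have := altChain_append l (!f) d h.2 l₂ h₂
    exact altChain_cons_cons.2 ⟨h.1, this⟩

lemma altChain_snoc2 (l : List X) (f : Bool) (c x y : X) (h : AltChain r s f (c :: l))
    (h1 : linkF r s (flagAfter f (c :: l)) ((c :: l).getLast (List.cons_ne_nil c l)) x)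
    (h2 : linkF r s (!(flagAfter f (c :: l))) x y) :
    AltChain r s f (c :: l ++ [x, y]) := by
  refine altChain_append l f c h [x, y] ?_
  refine altChain_cons_cons.2 ⟨h1, altChain_cons_cons.2 ⟨h2, altChain_single⟩⟩

lemma chain_of_J (hr : Equivalence r) (hs : Equivalence s) {c d : X} (h : Jrel r s c d) :
    ∀ (f : Bool) (p : ℕ), ∃ l : List X, AltChain r s f (c :: l) ∧
      (c :: l).getLast (List.cons_ne_nil c l) = d ∧ (c :: l).length % 2 = p % 2 := by
  induction h with
  | refl =>
    intro f p
    rcases Nat.mod_two_eq_zero_or_one p with hp | hp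
    · exact ⟨[c], altChain_cons_cons.2 ⟨linkF_refl hr hs f c, altChain_single⟩, by simp,
        by simp [hp]⟩
    · exact ⟨[], altChain_single, by simp, by simp [hp]⟩
  | tail hJ step ih =>
    rename_i m e
    intro f p
    obtain ⟨l, hch, hlast, hlen⟩ := ih f p
    set g := flagAfter f (c :: l) with hg
    have key : ∃ x y, linkF r s g m x ∧ linkF r s (!g) x y ∧ y = e := by
      rcases step with hstep | hstep
      · cases g
        · exact ⟨m, e, linkF_refl hr hs false m, hstep, rfl⟩
        · exact ⟨e, e, hstep, linkF_refl hr hs false e, rfl⟩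
      · cases g
        · exact ⟨e, e, hstep, linkF_refl hr hs true e, rfl⟩
        · exact ⟨m, e, linkF_refl hr hs true m, hstep, rfl⟩
    obtain ⟨x, y, k1, k2, rfl⟩ := key
    rw [← hlast] at k1
    refine ⟨l ++ [x, y], altChain_snoc2 l f c x y hch k1 k2, ?_, ?_⟩
    · show (c :: l ++ [x, y]).getLast _ = y
      have h2 : ([x, y] : List X) ≠ [] := by simp
      have := List.getLast_append_right (l := c :: l) h2
      simp only [List.cons_append] at this
      exact this.trans (by simp)
    · show (c :: l ++ [x, y]).length % 2 = p % 2
      simp only [List.length_cons, List.length_append, List.length_nil] at hlen ⊢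
      omega

lemma prod_eq_clean (hr : Equivalence r) (hs : Equivalence s) :
    prodRel r s = cleanProd r s := by
  have conv0 : ∀ {c : X} {d : X}, Jrel r s c d → ∀ p : ℕ, ∃ l : List X,
      AltChain r s true (c :: l) ∧ (c :: l).getLast (List.cons_ne_nil c l) = d ∧
      (c :: l).length % 2 = p % 2 := fun hJ p => chain_of_J hr hs hJ true p
  funext z w
  apply propext
  rcases z with x | x <;> rcases w with y | y <;>
    simp only [prodRel, cleanProd] <;> constructor
  · rintro (h | ⟨c, l, hlen, h1, h2, h3⟩)
    · exact Or.inl h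
    · exact Or.inr ⟨c, _, h1, altChain_getLast l true c h2, h3⟩
  · rintro (h | ⟨c, d, h1, hJ, h3⟩)
    · exact Or.inl h
    · obtain ⟨l, hch, hlast, hlen⟩ := chain_of_J hr hs hJ true 0
      exact Or.inr ⟨c, l, by simpa using hlen, h1, hch, by rw [hlast]; exact h3⟩
  · rintro ⟨c, l, hlen, h1, h2, h3⟩
    exact ⟨c, _, h1, altChain_getLast l true c h2, h3⟩
  · rintro ⟨c, d, h1, hJ, h3⟩
    obtain ⟨l, hch, hlast, hlen⟩ := chain_of_J hr hs hJ true 1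
    exact ⟨c, l, by simpa using hlen, h1, hch, by rw [hlast]; exact h3⟩
  · rintro ⟨c, l, hlen, h1, h2, h3⟩
    exact ⟨c, _, h1, altChain_getLast l true c h2, h3⟩
  · rintro ⟨c, d, h1, hJ, h3⟩
    obtain ⟨l, hch, hlast, hlen⟩ := chain_of_J hr hs hJ true 1
    exact ⟨c, l, by simpa using hlen, h1, hch, by rw [hlast]; exact h3⟩
  · rintro (h | ⟨c, l, hlen, h1, h2, h3⟩)
    · exact Or.inl h
    · exact Or.inr ⟨c, _, h1, altChain_getLast l false c h2, h3⟩
  · rintro (h | ⟨c, d, h1, hJ, h3⟩)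
    · exact Or.inl h
    · obtain ⟨l, hch, hlast, hlen⟩ := chain_of_J hr hs hJ false 0
      exact Or.inr ⟨c, l, by simpa using hlen, h1, hch, by rw [hlast]; exact h3⟩
end Chains

section Hide
variable {T : Type*} (S : T → T → Prop) (B : T → Prop)

def Hstep : T → T → Prop := fun a b => S a b ∧ ¬ B a ∧ ¬ B b

def Cstep : T → T → Prop := fun u v => B u ∧ B v ∧
  (S u v ∨ ∃ m b, ¬ B m ∧ S u m ∧ ReflTransGen (Hstep S B) m b ∧ S b v)

variable {S B}

lemma lemmaH_aux : ∀ {u v}, ReflTransGen S u v → B v →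
    (B u → ReflTransGen (Cstep S B) u v) ∧
    (¬ B u → ∃ b a, ReflTransGen (Hstep S B) u b ∧ S b a ∧ B a ∧
      ReflTransGen (Cstep S B) a v) := by
  intro u v h hBv
  induction h using ReflTransGen.head_induction_on with
  | refl => exact ⟨fun _ => ReflTransGen.refl, fun h => absurd hBv h⟩
  | head hum hmv ih =>
    rename_i u' m'
    constructor
    · intro hBu
      by_cases hBm : B m'
      · exact ReflTransGen.head ⟨hBu, hBm, Or.inl hum⟩ (ih.1 hBm)
      · obtain ⟨b, a, h1, h2, h3, h4⟩ := ih.2 hBm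
        exact ReflTransGen.head ⟨hBu, h3, Or.inr ⟨m', b, hBm, hum, h1, h2⟩⟩ h4
    · intro hBu
      by_cases hBm : B m'
      · exact ⟨u', m', ReflTransGen.refl, hum, hBm, ih.1 hBm⟩
      · obtain ⟨b, a, h1, h2, h3, h4⟩ := ih.2 hBm
        exact ⟨b, a, ReflTransGen.head ⟨hum, hBu, hBm⟩ h1, h2, h3, h4⟩

lemma lemmaH {u v} (h : ReflTransGen S u v) (hu : B u) (hv : B v) :
    ReflTransGen (Cstep S B) u v := (lemmaH_aux h hv).1 hu

end Hide

section RTGhelp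
variable {α β : Type*}

lemma rtg_of_steps {S S' : α → α → Prop} (h : ∀ a b, S a b → ReflTransGen S' a b) :
    ∀ {a b}, ReflTransGen S a b → ReflTransGen S' a b := by
  intro a b hab
  induction hab with
  | refl => exact ReflTransGen.refl
  | tail h' step ih => exact ih.trans (h _ _ step)

lemma rtg_map {G : α → β} {S : α → α → Prop} {S' : β → β → Prop}
    (h1 : ∀ a b, S a b → S' (G a) (G b)) :
    ∀ {a b}, ReflTransGen S a b → ReflTransGen S' (G a) (G b) := by
  intro a b hab
  induction hab with
  | refl => exact ReflTransGen.refl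
  | tail h' step ih => exact ih.tail (h1 _ _ step)

lemma rtg_map_rev {G : α → β} {S : α → α → Prop} {S' : β → β → Prop}
    (hG : Function.Injective G)
    (h1 : ∀ a b, S' (G a) (G b) → S a b)
    (h2 : ∀ u v, S' u v → (∃ a, u = G a) ∧ (∃ b, v = G b)) :
    ∀ {a b}, ReflTransGen S' (G a) (G b) → ReflTransGen S a b := by
  suffices key : ∀ {a : α} {v}, ReflTransGen S' (G a) v → ∀ b, v = G b → ReflTransGen S a b by
    intro a b h; exact key h b rfl
  intro a v hav
  induction hav with
  | refl => intro b hb; exact hG hb ▸ ReflTransGen.refl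
  | tail h' step ih =>
    intro b hb
    subst hb
    obtain ⟨⟨c, rfl⟩, _⟩ := h2 _ _ step
    exact (ih c rfl).tail (h1 _ _ step)

end RTGhelp

section Core
variable {X : Type*}

/-- three-layer type: layer 1 = `inl`, layer 2 = `inr ∘ inl`, layer 3 = `inr ∘ inr`. -/
def S3 (r s : SRel X) : (X ⊕ (X ⊕ X)) → (X ⊕ (X ⊕ X)) → Prop
  | inl x, inl y => r (inl x) (inl y)
  | inl x, inr (inl c) => r (inl x) (inr c)
  | inr (inl c), inl y => r (inr c) (inl y)
  | inr (inl c), inr (inl d) => r (inr c) (inr d) ∨ s (inl c) (inl d)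
  | inr (inl c), inr (inr y) => s (inl c) (inr y)
  | inr (inr x), inr (inl d) => s (inr x) (inl d)
  | inr (inr x), inr (inr y) => s (inr x) (inr y)
  | inl _, inr (inr _) => False
  | inr (inr _), inl _ => False

def e13 : X ⊕ X → X ⊕ (X ⊕ X) := Sum.map id inr

def B3 : X ⊕ (X ⊕ X) → Prop := fun u => match u with
  | inr (inl _) => False
  | _ => True

lemma B3_iff {u : X ⊕ (X ⊕ X)} : B3 u ↔ ∃ z, u = e13 z := by
  rcases u with x | (c | y)
  · exact ⟨fun _ => ⟨inl x, rfl⟩, fun _ => trivial⟩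
  · simp only [B3]
    constructor
    · intro h; exact h.elim
    · rintro ⟨z, hz⟩; rcases z with z | z <;> simp [e13] at hz
  · exact ⟨fun _ => ⟨inr y, rfl⟩, fun _ => trivial⟩

lemma notB3_iff {u : X ⊕ (X ⊕ X)} : ¬ B3 u ↔ ∃ c, u = inr (inl c) := by
  rcases u with x | (c | y)
  · simp [B3]
  · simp [B3]
  · simp [B3]

lemma e13_inj : Function.Injective (e13 (X := X)) := by
  intro a b h
  rcases a with a | a <;> rcases b with b | b <;> simp [e13] at h <;> simp [h]

variable {r s : SRel X}

lemma hseg3 : ∀ {u v}, ReflTransGen (Hstep (S3 r s) B3) u v →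
    ∀ c, u = inr (inl c) → ∃ d, v = inr (inl d) ∧ Jrel r s c d := by
  intro u v h
  induction h with
  | refl => exact fun c hc => ⟨c, hc, Jrel.rfl⟩
  | tail h' step ih =>
    intro c hc
    obtain ⟨d', rfl, hJ⟩ := ih c hc
    obtain ⟨hS, _, hBv⟩ := step
    obtain ⟨d, rfl⟩ := notB3_iff.1 hBv
    exact ⟨d, rfl, hJ.trans (ReflTransGen.single (Or.symm hS))⟩

lemma J_to_rtg : ∀ {c d}, Jrel r s c d →
    ReflTransGen (S3 r s) (inr (inl c)) (inr (inl d)) :=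
  fun h => rtg_map (G := fun c => (inr (inl c) : X ⊕ (X ⊕ X)))
    (fun a b hab => Or.symm hab) h

lemma cstep3_clean (hr : Equivalence r) (hs : Equivalence s) :
    ∀ {z w}, Cstep (S3 r s) B3 (e13 z) (e13 w) → cleanProd r s z w := by
  rintro z w ⟨_, _, hdir | ⟨m, b, hm, h1, h2, h3⟩⟩
  · rcases z with x | x <;> rcases w with y | y
    · exact Or.inl hdir
    · exact hdir.elim
    · exact hdir.elim
    · exact Or.inl hdir
  · obtain ⟨c, rfl⟩ := notB3_iff.1 hm
    obtain ⟨d, rfl, hJ⟩ := hseg3 h2 c rfl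
    rcases z with x | x <;> rcases w with y | y
    · exact Or.inr ⟨c, d, h1, hJ, h3⟩
    · exact ⟨c, d, h1, hJ, h3⟩
    · exact ⟨d, c, hr.symm h3, hJ.symm hr hs, hs.symm h1⟩
    · exact Or.inr ⟨c, d, h1, hJ, h3⟩

/-- The core lemma: the product is connectivity in the glued graph. -/
lemma clean_iff_rtg (hr : Equivalence r) (hs : Equivalence s) (z w : X ⊕ X) :
    cleanProd r s z w ↔ ReflTransGen (S3 r s) (e13 z) (e13 w) := by
  constructor
  · intro h
    rcases z with x | x <;> rcases w with y | y
    · rcases h with h | ⟨c, d, h1, hJ, h3⟩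
      · exact ReflTransGen.single h
      · exact (ReflTransGen.single (show S3 r s (e13 (inl x)) (inr (inl c)) from h1)).trans
          ((J_to_rtg hJ).trans (ReflTransGen.single h3))
    · obtain ⟨c, d, h1, hJ, h3⟩ := h
      exact (ReflTransGen.single (show S3 r s (e13 (inl x)) (inr (inl c)) from h1)).trans
        ((J_to_rtg hJ).trans (ReflTransGen.single h3))
    · obtain ⟨c, d, h1, hJ, h3⟩ := h
      exact (ReflTransGen.single (show S3 r s (e13 (inr x)) (inr (inl d)) from hs.symm h3)).trans
        ((J_to_rtg (hJ.symm hr hs)).trans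
          (ReflTransGen.single (show S3 r s (inr (inl c)) (e13 (inl y)) from hr.symm h1)))
    · rcases h with h | ⟨c, d, h1, hJ, h3⟩
      · exact ReflTransGen.single h
      · exact (ReflTransGen.single (show S3 r s (e13 (inr x)) (inr (inl c)) from h1)).trans
          ((J_to_rtg hJ).trans (ReflTransGen.single h3))
  · intro h
    have h' := lemmaH h (B3_iff.2 ⟨z, rfl⟩) (B3_iff.2 ⟨w, rfl⟩)
    clear h
    suffices key : ∀ {v}, ReflTransGen (Cstep (S3 r s) B3) (e13 z) v →
        ∀ w, v = e13 w → cleanProd r s z w from key h' w rfl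
    intro v hv
    induction hv with
    | refl => intro w hw; exact (e13_inj hw) ▸ clean_refl hr hs z
    | tail h' step ih =>
      intro w hw
      subst hw
      obtain ⟨z', rfl⟩ := B3_iff.1 step.1
      exact clean_trans hr hs (ih z' rfl) (cstep3_clean hr hs step)

end Core

section Assoc
variable {X : Type*}

/-- four layers: L1 = inl∘inl, L2 = inl∘inr, L3 = inr∘inl, L4 = inr∘inr -/
def S4 (r s t : SRel X) : ((X ⊕ X) ⊕ (X ⊕ X)) → ((X ⊕ X) ⊕ (X ⊕ X)) → Prop
  | inl (inl x), inl (inl y) => r (inl x) (inl y)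
  | inl (inl x), inl (inr c) => r (inl x) (inr c)
  | inl (inr c), inl (inl y) => r (inr c) (inl y)
  | inl (inr c), inl (inr d) => r (inr c) (inr d) ∨ s (inl c) (inl d)
  | inl (inr c), inr (inl d) => s (inl c) (inr d)
  | inr (inl c), inl (inr d) => s (inr c) (inl d)
  | inr (inl c), inr (inl d) => s (inr c) (inr d) ∨ t (inl c) (inl d)
  | inr (inl c), inr (inr y) => t (inl c) (inr y)
  | inr (inr x), inr (inl d) => t (inr x) (inl d)
  | inr (inr x), inr (inr y) => t (inr x) (inr y)
  | _, _ => False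

def SL (p t : SRel X) : ((X ⊕ X) ⊕ (X ⊕ X)) → ((X ⊕ X) ⊕ (X ⊕ X)) → Prop
  | inl (inl x), inl (inl y) => p (inl x) (inl y)
  | inl (inl x), inr (inl c) => p (inl x) (inr c)
  | inr (inl c), inl (inl y) => p (inr c) (inl y)
  | inr (inl c), inr (inl d) => p (inr c) (inr d) ∨ t (inl c) (inl d)
  | inr (inl c), inr (inr y) => t (inl c) (inr y)
  | inr (inr x), inr (inl d) => t (inr x) (inl d)
  | inr (inr x), inr (inr y) => t (inr x) (inr y)
  | _, _ => False

def SR (r q : SRel X) : ((X ⊕ X) ⊕ (X ⊕ X)) → ((X ⊕ X) ⊕ (X ⊕ X)) → Prop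
  | inl (inl x), inl (inl y) => r (inl x) (inl y)
  | inl (inl x), inl (inr c) => r (inl x) (inr c)
  | inl (inr c), inl (inl y) => r (inr c) (inl y)
  | inl (inr c), inl (inr d) => r (inr c) (inr d) ∨ q (inl c) (inl d)
  | inl (inr c), inr (inr y) => q (inl c) (inr y)
  | inr (inr x), inl (inr d) => q (inr x) (inl d)
  | inr (inr x), inr (inr y) => q (inr x) (inr y)
  | _, _ => False

def G123 : (X ⊕ (X ⊕ X)) → ((X ⊕ X) ⊕ (X ⊕ X))
  | inl x => inl (inl x)
  | inr (inl c) => inl (inr c)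
  | inr (inr y) => inr (inl y)

def G234 : (X ⊕ (X ⊕ X)) → ((X ⊕ X) ⊕ (X ⊕ X))
  | inl x => inl (inr x)
  | inr (inl c) => inr (inl c)
  | inr (inr y) => inr (inr y)

def G134 : (X ⊕ (X ⊕ X)) → ((X ⊕ X) ⊕ (X ⊕ X))
  | inl x => inl (inl x)
  | inr (inl c) => inr (inl c)
  | inr (inr y) => inr (inr y)

def G124 : (X ⊕ (X ⊕ X)) → ((X ⊕ X) ⊕ (X ⊕ X))
  | inl x => inl (inl x)
  | inr (inl c) => inl (inr c)
  | inr (inr y) => inr (inr y)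

def l14 : X ⊕ X → ((X ⊕ X) ⊕ (X ⊕ X)) := Sum.map inl inr

variable {r s t : SRel X}

lemma S3_to_S4_123 : ∀ a b, S3 r s a b → S4 r s t (G123 a) (G123 b)
  | inl x, inl y, h => h
  | inl x, inr (inl c), h => h
  | inr (inl c), inl y, h => h
  | inr (inl c), inr (inl d), h => h
  | inr (inl c), inr (inr y), h => h
  | inr (inr x), inr (inl d), h => h
  | inr (inr x), inr (inr y), h => Or.inl h
  | inl _, inr (inr _), h => h.elim
  | inr (inr _), inl _, h => h.elim

lemma S3_to_S4_234 : ∀ a b, S3 s t a b → S4 r s t (G234 a) (G234 b)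
  | inl x, inl y, h => Or.inr h
  | inl x, inr (inl c), h => h
  | inr (inl c), inl y, h => h
  | inr (inl c), inr (inl d), h => h
  | inr (inl c), inr (inr y), h => h
  | inr (inr x), inr (inl d), h => h
  | inr (inr x), inr (inr y), h => h
  | inl _, inr (inr _), h => h.elim
  | inr (inr _), inl _, h => h.elim

lemma p_to_S4 (hr : Equivalence r) (hs : Equivalence s) {z w : X ⊕ X}
    (h : cleanProd r s z w) :
    ReflTransGen (S4 r s t) (G123 (e13 z)) (G123 (e13 w)) :=
  rtg_map (G := G123) S3_to_S4_123 ((clean_iff_rtg hr hs z w).1 h)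

lemma q_to_S4 (hs : Equivalence s) (ht : Equivalence t) {z w : X ⊕ X}
    (h : cleanProd s t z w) :
    ReflTransGen (S4 r s t) (G234 (e13 z)) (G234 (e13 w)) :=
  rtg_map (G := G234) S3_to_S4_234 ((clean_iff_rtg hs ht z w).1 h)

lemma SL_sub (hr : Equivalence r) (hs : Equivalence s) :
    ∀ u v, SL (cleanProd r s) t u v → ReflTransGen (S4 r s t) u v
  | inl (inl x), inl (inl y), h => p_to_S4 hr hs (z := inl x) (w := inl y) h
  | inl (inl x), inr (inl c), h => p_to_S4 hr hs (z := inl x) (w := inr c) h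
  | inr (inl c), inl (inl y), h => p_to_S4 hr hs (z := inr c) (w := inl y) h
  | inr (inl c), inr (inl d), Or.inl h => p_to_S4 hr hs (z := inr c) (w := inr d) h
  | inr (inl c), inr (inl d), Or.inr h => ReflTransGen.single (Or.inr h)
  | inr (inl c), inr (inr y), h => ReflTransGen.single h
  | inr (inr x), inr (inl d), h => ReflTransGen.single h
  | inr (inr x), inr (inr y), h => ReflTransGen.single h
  | inl (inl _), inl (inr _), h => h.elim
  | inl (inl _), inr (inr _), h => h.elim
  | inl (inr _), _, h => h.elim
  | inr (inl _), inl (inr _), h => h.elim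
  | inr (inr _), inl _, h => h.elim

lemma SR_sub (hs : Equivalence s) (ht : Equivalence t) :
    ∀ u v, SR r (cleanProd s t) u v → ReflTransGen (S4 r s t) u v
  | inl (inl x), inl (inl y), h => ReflTransGen.single h
  | inl (inl x), inl (inr c), h => ReflTransGen.single h
  | inl (inr c), inl (inl y), h => ReflTransGen.single h
  | inl (inr c), inl (inr d), Or.inl h => ReflTransGen.single (Or.inl h)
  | inl (inr c), inl (inr d), Or.inr h => q_to_S4 hs ht (z := inl c) (w := inl d) h
  | inl (inr c), inr (inr y), h => q_to_S4 hs ht (z := inl c) (w := inr y) h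
  | inr (inr x), inl (inr d), h => q_to_S4 hs ht (z := inr x) (w := inl d) h
  | inr (inr x), inr (inr y), h => q_to_S4 hs ht (z := inr x) (w := inr y) h
  | inl (inl _), inr _, h => h.elim
  | inl (inr _), inr (inl _), h => h.elim
  | inr (inl _), _, h => h.elim
  | inr (inr _), inl (inl _), h => h.elim
  | inr (inr _), inr (inl _), h => h.elim

def B2' : ((X ⊕ X) ⊕ (X ⊕ X)) → Prop := fun u => match u with
  | inl (inr _) => False
  | _ => True

def B3' : ((X ⊕ X) ⊕ (X ⊕ X)) → Prop := fun u => match u with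
  | inr (inl _) => False
  | _ => True

lemma notB2'_iff {u : (X ⊕ X) ⊕ (X ⊕ X)} : ¬ B2' u ↔ ∃ c, u = inl (inr c) := by
  rcases u with (x | c) | (c | y) <;> simp [B2']

lemma notB3'_iff {u : (X ⊕ X) ⊕ (X ⊕ X)} : ¬ B3' u ↔ ∃ c, u = inr (inl c) := by
  rcases u with (x | c) | (c | y) <;> simp [B3']

lemma hseg2' : ∀ {u v}, ReflTransGen (Hstep (S4 r s t) B2') u v →
    ∀ c, u = inl (inr c) → ∃ d, v = inl (inr d) ∧ Jrel r s c d := by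
  intro u v h
  induction h with
  | refl => exact fun c hc => ⟨c, hc, Jrel.rfl⟩
  | tail h' step ih =>
    intro c hc
    obtain ⟨d', rfl, hJ⟩ := ih c hc
    obtain ⟨hS, _, hBv⟩ := step
    obtain ⟨d, rfl⟩ := notB2'_iff.1 hBv
    exact ⟨d, rfl, hJ.trans (ReflTransGen.single (Or.symm hS))⟩

lemma hseg3' : ∀ {u v}, ReflTransGen (Hstep (S4 r s t) B3') u v →
    ∀ c, u = inr (inl c) → ∃ d, v = inr (inl d) ∧ Jrel s t c d := by
  intro u v h
  induction h with
  | refl => exact fun c hc => ⟨c, hc, Jrel.rfl⟩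
  | tail h' step ih =>
    intro c hc
    obtain ⟨d', rfl, hJ⟩ := ih c hc
    obtain ⟨hS, _, hBv⟩ := step
    obtain ⟨d, rfl⟩ := notB3'_iff.1 hBv
    exact ⟨d, rfl, hJ.trans (ReflTransGen.single (Or.symm hS))⟩

lemma cstepL (hr : Equivalence r) (hs : Equivalence s) :
    ∀ {u v}, Cstep (S4 r s t) B2' u v → ReflTransGen (SL (cleanProd r s) t) u v := by
  rintro u v ⟨hBu, hBv, hdir | ⟨m, b, hm, h1, h2, h3⟩⟩
  · rcases u with (x | c) | (c | y) <;> rcases v with (x' | c') | (c' | y')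
    · exact ReflTransGen.single (show SL (cleanProd r s) t _ _ from Or.inl hdir)
    · exact hBv.elim
    · exact hdir.elim
    · exact hdir.elim
    · exact hBu.elim
    · exact hBu.elim
    · exact hBu.elim
    · exact hBu.elim
    · exact hdir.elim
    · exact hBv.elim
    · rcases hdir with h | h
      · exact ReflTransGen.single (show SL (cleanProd r s) t _ _ from Or.inl (Or.inl h))
      · exact ReflTransGen.single (show SL (cleanProd r s) t _ _ from Or.inr h)
    · exact ReflTransGen.single hdir
    · exact hdir.elim
    · exact hBv.elim
    · exact ReflTransGen.single hdir
    · exact ReflTransGen.single hdir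
  · obtain ⟨c, rfl⟩ := notB2'_iff.1 hm
    obtain ⟨d, rfl, hJ⟩ := hseg2' h2 c rfl
    rcases u with (x | c₀) | (c₀ | y₀) <;> rcases v with (x' | c') | (c' | y')
    · exact ReflTransGen.single (show SL (cleanProd r s) t _ _ from Or.inr ⟨c, d, h1, hJ, h3⟩)
    · exact hBv.elim
    · exact ReflTransGen.single (show SL (cleanProd r s) t _ _ from ⟨c, d, h1, hJ, h3⟩)
    · exact h3.elim
    · exact hBu.elim
    · exact hBu.elim
    · exact hBu.elim
    · exact hBu.elim
    · exact ReflTransGen.single (show SL (cleanProd r s) t _ _ from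
        ⟨d, c, hr.symm h3, hJ.symm hr hs, hs.symm h1⟩)
    · exact hBv.elim
    · exact ReflTransGen.single (show SL (cleanProd r s) t _ _ from
        Or.inl (Or.inr ⟨c, d, h1, hJ, h3⟩))
    · exact h3.elim
    · exact h1.elim
    · exact h1.elim
    · exact h1.elim
    · exact h1.elim

lemma cstepR (hs : Equivalence s) (ht : Equivalence t) :
    ∀ {u v}, Cstep (S4 r s t) B3' u v → ReflTransGen (SR r (cleanProd s t)) u v := by
  rintro u v ⟨hBu, hBv, hdir | ⟨m, b, hm, h1, h2, h3⟩⟩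
  · rcases u with (x | c) | (c | y) <;> rcases v with (x' | c') | (c' | y')
    · exact ReflTransGen.single hdir
    · exact ReflTransGen.single hdir
    · exact hBv.elim
    · exact hdir.elim
    · exact ReflTransGen.single hdir
    · rcases hdir with h | h
      · exact ReflTransGen.single (show SR r (cleanProd s t) _ _ from Or.inl h)
      · exact ReflTransGen.single (show SR r (cleanProd s t) _ _ from Or.inr (Or.inl h))
    · exact hBv.elim
    · exact hdir.elim
    · exact hBu.elim
    · exact hBu.elim
    · exact hBu.elim
    · exact hBu.elim
    · exact hdir.elim
    · exact hdir.elim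
    · exact hBv.elim
    · exact ReflTransGen.single (show SR r (cleanProd s t) _ _ from Or.inl hdir)
  · obtain ⟨c, rfl⟩ := notB3'_iff.1 hm
    obtain ⟨d, rfl, hJ⟩ := hseg3' h2 c rfl
    rcases u with (x | c₀) | (c₀ | y₀) <;> rcases v with (x' | c') | (c' | y')
    · exact h1.elim
    · exact h1.elim
    · exact hBv.elim
    · exact h1.elim
    · exact h3.elim
    · exact ReflTransGen.single (show SR r (cleanProd s t) _ _ from
        Or.inr (Or.inr ⟨c, d, h1, hJ, h3⟩))
    · exact hBv.elim
    · exact ReflTransGen.single (show SR r (cleanProd s t) _ _ from ⟨c, d, h1, hJ, h3⟩)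
    · exact hBu.elim
    · exact hBu.elim
    · exact hBu.elim
    · exact hBu.elim
    · exact h3.elim
    · exact ReflTransGen.single (show SR r (cleanProd s t) _ _ from
        ⟨d, c, hs.symm h3, hJ.symm hs ht, ht.symm h1⟩)
    · exact hBv.elim
    · exact ReflTransGen.single (show SR r (cleanProd s t) _ _ from
        Or.inr ⟨c, d, h1, hJ, h3⟩)

lemma G134_inj : Function.Injective (G134 (X := X)) := by
  intro a b h
  rcases a with x | (c | y) <;> rcases b with x' | (c' | y') <;> simp [G134] at h <;> simp [h]

lemma G124_inj : Function.Injective (G124 (X := X)) := by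
  intro a b h
  rcases a with x | (c | y) <;> rcases b with x' | (c' | y') <;> simp [G124] at h <;> simp [h]

lemma G134_e13 : ∀ z : X ⊕ X, G134 (e13 z) = l14 z
  | inl x => rfl
  | inr y => rfl

lemma G124_e13 : ∀ z : X ⊕ X, G124 (e13 z) = l14 z
  | inl x => rfl
  | inr y => rfl

variable {p q : SRel X}

lemma S3_to_SL : ∀ a b, S3 p t a b → SL p t (G134 a) (G134 b)
  | inl x, inl y, h => h
  | inl x, inr (inl c), h => h
  | inr (inl c), inl y, h => h
  | inr (inl c), inr (inl d), h => h
  | inr (inl c), inr (inr y), h => h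
  | inr (inr x), inr (inl d), h => h
  | inr (inr x), inr (inr y), h => h
  | inl _, inr (inr _), h => h.elim
  | inr (inr _), inl _, h => h.elim

lemma SL_to_S3 : ∀ a b, SL p t (G134 a) (G134 b) → S3 p t a b
  | inl x, inl y, h => h
  | inl x, inr (inl c), h => h
  | inr (inl c), inl y, h => h
  | inr (inl c), inr (inl d), h => h
  | inr (inl c), inr (inr y), h => h
  | inr (inr x), inr (inl d), h => h
  | inr (inr x), inr (inr y), h => h
  | inl _, inr (inr _), h => h.elim
  | inr (inr _), inl _, h => h.elim

lemma SL_range : ∀ u v, SL p t u v → (∃ a, u = G134 a) ∧ (∃ b, v = G134 b)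
  | inl (inl x), inl (inl y), h => ⟨⟨inl x, rfl⟩, ⟨inl y, rfl⟩⟩
  | inl (inl x), inr (inl c), h => ⟨⟨inl x, rfl⟩, ⟨inr (inl c), rfl⟩⟩
  | inr (inl c), inl (inl y), h => ⟨⟨inr (inl c), rfl⟩, ⟨inl y, rfl⟩⟩
  | inr (inl c), inr (inl d), h => ⟨⟨inr (inl c), rfl⟩, ⟨inr (inl d), rfl⟩⟩
  | inr (inl c), inr (inr y), h => ⟨⟨inr (inl c), rfl⟩, ⟨inr (inr y), rfl⟩⟩
  | inr (inr x), inr (inl d), h => ⟨⟨inr (inr x), rfl⟩, ⟨inr (inl d), rfl⟩⟩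
  | inr (inr x), inr (inr y), h => ⟨⟨inr (inr x), rfl⟩, ⟨inr (inr y), rfl⟩⟩
  | inl (inl _), inl (inr _), h => h.elim
  | inl (inl _), inr (inr _), h => h.elim
  | inl (inr _), _, h => h.elim
  | inr (inl _), inl (inr _), h => h.elim
  | inr (inr _), inl _, h => h.elim

lemma S3_to_SR : ∀ a b, S3 r q a b → SR r q (G124 a) (G124 b)
  | inl x, inl y, h => h
  | inl x, inr (inl c), h => h
  | inr (inl c), inl y, h => h
  | inr (inl c), inr (inl d), h => h
  | inr (inl c), inr (inr y), h => h
  | inr (inr x), inr (inl d), h => h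
  | inr (inr x), inr (inr y), h => h
  | inl _, inr (inr _), h => h.elim
  | inr (inr _), inl _, h => h.elim

lemma SR_to_S3 : ∀ a b, SR r q (G124 a) (G124 b) → S3 r q a b
  | inl x, inl y, h => h
  | inl x, inr (inl c), h => h
  | inr (inl c), inl y, h => h
  | inr (inl c), inr (inl d), h => h
  | inr (inl c), inr (inr y), h => h
  | inr (inr x), inr (inl d), h => h
  | inr (inr x), inr (inr y), h => h
  | inl _, inr (inr _), h => h.elim
  | inr (inr _), inl _, h => h.elim

lemma SR_range : ∀ u v, SR r q u v → (∃ a, u = G124 a) ∧ (∃ b, v = G124 b)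
  | inl (inl x), inl (inl y), h => ⟨⟨inl x, rfl⟩, ⟨inl y, rfl⟩⟩
  | inl (inl x), inl (inr c), h => ⟨⟨inl x, rfl⟩, ⟨inr (inl c), rfl⟩⟩
  | inl (inr c), inl (inl y), h => ⟨⟨inr (inl c), rfl⟩, ⟨inl y, rfl⟩⟩
  | inl (inr c), inl (inr d), h => ⟨⟨inr (inl c), rfl⟩, ⟨inr (inl d), rfl⟩⟩
  | inl (inr c), inr (inr y), h => ⟨⟨inr (inl c), rfl⟩, ⟨inr (inr y), rfl⟩⟩
  | inr (inr x), inl (inr d), h => ⟨⟨inr (inr x), rfl⟩, ⟨inr (inl d), rfl⟩⟩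
  | inr (inr x), inr (inr y), h => ⟨⟨inr (inr x), rfl⟩, ⟨inr (inr y), rfl⟩⟩
  | inl (inl _), inr _, h => h.elim
  | inl (inr _), inr (inl _), h => h.elim
  | inr (inl _), _, h => h.elim
  | inr (inr _), inl (inl _), h => h.elim
  | inr (inr _), inr (inl _), h => h.elim

lemma B2'_l14 : ∀ z : X ⊕ X, B2' (l14 z)
  | inl x => trivial
  | inr y => trivial

lemma B3'_l14 : ∀ z : X ⊕ X, B3' (l14 z)
  | inl x => trivial
  | inr y => trivial

lemma clean_left_iff_S4 (hr : Equivalence r) (hs : Equivalence s) (ht : Equivalence t)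
    (z w : X ⊕ X) : cleanProd (cleanProd r s) t z w ↔
      ReflTransGen (S4 r s t) (l14 z) (l14 w) := by
  have hp := clean_equiv hr hs
  rw [clean_iff_rtg hp ht]
  constructor
  · intro h
    have h2 := rtg_map (G := G134) S3_to_SL h
    rw [G134_e13, G134_e13] at h2
    exact rtg_of_steps (SL_sub hr hs) h2
  · intro h
    have h2 : ReflTransGen (SL (cleanProd r s) t) (l14 z) (l14 w) :=
      rtg_of_steps (fun a b hab => cstepL hr hs hab)
        (lemmaH h (B2'_l14 z) (B2'_l14 w))
    rw [← G134_e13, ← G134_e13] at h2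
    exact rtg_map_rev G134_inj SL_to_S3 SL_range h2

lemma clean_right_iff_S4 (hr : Equivalence r) (hs : Equivalence s) (ht : Equivalence t)
    (z w : X ⊕ X) : cleanProd r (cleanProd s t) z w ↔
      ReflTransGen (S4 r s t) (l14 z) (l14 w) := by
  have hq := clean_equiv hs ht
  rw [clean_iff_rtg hr hq]
  constructor
  · intro h
    have h2 := rtg_map (G := G124) S3_to_SR h
    rw [G124_e13, G124_e13] at h2
    exact rtg_of_steps (SR_sub hs ht) h2
  · intro h
    have h2 : ReflTransGen (SR r (cleanProd s t)) (l14 z) (l14 w) :=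
      rtg_of_steps (fun a b hab => cstepR hs ht hab)
        (lemmaH h (B3'_l14 z) (B3'_l14 w))
    rw [← G124_e13, ← G124_e13] at h2
    exact rtg_map_rev G124_inj SR_to_S3 SR_range h2

lemma clean_assoc (hr : Equivalence r) (hs : Equivalence s) (ht : Equivalence t) :
    cleanProd (cleanProd r s) t = cleanProd r (cleanProd s t) := by
  funext z w
  apply propext
  rw [clean_left_iff_S4 hr hs ht, clean_right_iff_S4 hr hs ht]

end Assoc


section Phi
variable {X : Type*}

def iota : X ⊕ X → Option X ⊕ Option X := Sum.map some some

lemma iota_inj : Function.Injective (iota (X := X)) := by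
  intro a b h
  rcases a with a | a <;> rcases b with b | b <;> simp [iota] at h <;> simp [h]

lemma iota_ne_inl_none : ∀ z : X ⊕ X, iota z ≠ inl none
  | inl x => by simp [iota]
  | inr x => by simp [iota]

lemma iota_ne_inr_none : ∀ z : X ⊕ X, iota z ≠ inr none
  | inl x => by simp [iota]
  | inr x => by simp [iota]

variable {r : SRel X}

lemma inExtra_iota (r : SRel X) : ∀ z : X ⊕ X, InExtraBlock r (iota z) ↔ IsPointOf r z
  | inl x => Iff.rfl
  | inr x => Iff.rfl

lemma not_pt_of_rel {z w : X ⊕ X} (h : r z w) (hne : w ≠ z) : ¬ IsPointOf r z :=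
  fun hp => hne (hp w h)

lemma pt_transfer (hr : Equivalence r) {z w : X ⊕ X} (h : r z w) (hz : ¬ IsPointOf r z) :
    ¬ IsPointOf r w := by
  intro hw
  have hzw : z = w := hw z (hr.symm h)
  exact hz (hzw ▸ hw)

lemma phiRel_iota_iota (r : SRel X) (z w : X ⊕ X) :
    phiRel r (iota z) (iota w) ↔
      (r z w ∧ ¬ IsPointOf r z) ∨ (IsPointOf r z ∧ IsPointOf r w) := by
  constructor
  · rintro (⟨z', w', hz, hw, h1, h2⟩ | ⟨h1, h2⟩)
    · obtain rfl := iota_inj hz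
      obtain rfl := iota_inj hw
      exact Or.inl ⟨h1, h2⟩
    · exact Or.inr ⟨(inExtra_iota r z).1 h1, (inExtra_iota r w).1 h2⟩
  · rintro (⟨h1, h2⟩ | ⟨h1, h2⟩)
    · exact Or.inl ⟨z, w, rfl, rfl, h1, h2⟩
    · exact Or.inr ⟨(inExtra_iota r z).2 h1, (inExtra_iota r w).2 h2⟩

lemma phiRel_iota_inl_none (r : SRel X) (z : X ⊕ X) :
    phiRel r (iota z) (inl none) ↔ IsPointOf r z := by
  constructor
  · rintro (⟨z', w', hz, hw, h1, h2⟩ | ⟨h1, h2⟩)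
    · exact absurd hw.symm (iota_ne_inl_none w')
    · exact (inExtra_iota r z).1 h1
  · intro h
    exact Or.inr ⟨(inExtra_iota r z).2 h, trivial⟩

lemma phiRel_iota_inr_none (r : SRel X) (z : X ⊕ X) :
    phiRel r (iota z) (inr none) ↔ IsPointOf r z := by
  constructor
  · rintro (⟨z', w', hz, hw, h1, h2⟩ | ⟨h1, h2⟩)
    · exact absurd hw.symm (iota_ne_inr_none w')
    · exact (inExtra_iota r z).1 h1
  · intro h
    exact Or.inr ⟨(inExtra_iota r z).2 h, trivial⟩

lemma phiRel_none_none (r : SRel X) : phiRel r (inl none) (inr none) :=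
  Or.inr ⟨trivial, trivial⟩

lemma phiRel_equiv (hr : Equivalence r) : Equivalence (phiRel r) := by
  constructor
  · rintro (u | u)
    · rcases u with _ | x
      · exact Or.inr ⟨trivial, trivial⟩
      · by_cases h : IsPointOf r (inl x)
        · exact Or.inr ⟨h, h⟩
        · exact Or.inl ⟨inl x, inl x, rfl, rfl, hr.refl _, h⟩
    · rcases u with _ | x
      · exact Or.inr ⟨trivial, trivial⟩
      · by_cases h : IsPointOf r (inr x)
        · exact Or.inr ⟨h, h⟩
        · exact Or.inl ⟨inr x, inr x, rfl, rfl, hr.refl _, h⟩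
  · rintro u v (⟨z, w, rfl, rfl, h1, h2⟩ | ⟨h1, h2⟩)
    · exact Or.inl ⟨w, z, rfl, rfl, hr.symm h1, pt_transfer hr h1 h2⟩
    · exact Or.inr ⟨h2, h1⟩
  · rintro u v t (⟨z, w, rfl, rfl, h1, h2⟩ | ⟨h1, h2⟩) (⟨z', w', hz', rfl, h1', h2'⟩ | ⟨h1', h2'⟩)
    · obtain rfl := iota_inj hz'
      exact Or.inl ⟨z, w', rfl, rfl, hr.trans h1 h1', h2⟩
    · exact absurd ((inExtra_iota r w).1 h1') (pt_transfer hr h1 h2)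
    · rw [hz'] at h2
      exact absurd ((inExtra_iota r z').1 h2) h2'
    · exact Or.inr ⟨h1, h2'⟩

end Phi

section Product
variable {X : Type*}

/-- pull back a relation on `Option X ⊕ Option X` to `X ⊕ X` -/
def pb (q : SRel (Option X)) : SRel X := fun z w =>
  z = w ∨ (q (iota z) (iota w) ∧ ¬ q (iota z) (inl none))

lemma pb_phi (a : PIP X) : pb (phiRel a.1.r) = a.1.r := by
  funext z w
  apply propext
  constructor
  · rintro (rfl | ⟨h, hn⟩)
    · exact a.1.iseqv.refl z
    · rw [phiRel_iota_inl_none] at hn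
      rcases (phiRel_iota_iota _ z w).1 h with ⟨h1, _⟩ | ⟨h1, _⟩
      · exact h1
      · exact absurd h1 hn
  · intro h
    by_cases hzw : z = w
    · exact Or.inl hzw
    · have hpt : ¬ IsPointOf a.1.r z := not_pt_of_rel h (Ne.symm hzw)
      exact Or.inr ⟨(phiRel_iota_iota _ z w).2 (Or.inl ⟨h, hpt⟩),
        fun hc => hpt ((phiRel_iota_inl_none _ z).1 hc)⟩

variable (a b : PIP X)

def qRel : SRel (Option X) := cleanProd (phiRel a.1.r) (phiRel b.1.r)

lemma q_equiv : Equivalence (qRel a b) :=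
  clean_equiv (phiRel_equiv a.1.iseqv) (phiRel_equiv b.1.iseqv)

lemma q_none_none : qRel a b (inl none) (inr none) :=
  ⟨none, none, phiRel_none_none _, Jrel.rfl, phiRel_none_none _⟩

/-- partner in the same class on the other side, or a point -/
lemma partner_l (a : PIP X) (x : X) :
    IsPointOf a.1.r (inl x) ∨ ∃ y, a.1.r (inl x) (inr y) := by
  rcases a.2 (inl x) with ⟨_, y, hy⟩ | ⟨w, hw⟩
  · exact Or.inr ⟨y, hy⟩
  · left
    have hx : (inl x : X ⊕ X) ∈ {y | a.1.r (inl x) y} := a.1.iseqv.refl _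
    rw [hw] at hx
    intro w' hw'
    have : w' ∈ {y | a.1.r (inl x) y} := hw'
    rw [hw] at this
    rw [this, ← hx]

lemma partner_r (a : PIP X) (x : X) :
    IsPointOf a.1.r (inr x) ∨ ∃ y, a.1.r (inr x) (inl y) := by
  rcases a.2 (inr x) with ⟨⟨y, hy⟩, _⟩ | ⟨w, hw⟩
  · exact Or.inr ⟨y, hy⟩
  · left
    have hx : (inr x : X ⊕ X) ∈ {y | a.1.r (inr x) y} := a.1.iseqv.refl _
    rw [hw] at hx
    intro w' hw'
    have : w' ∈ {y | a.1.r (inr x) y} := hw'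
    rw [hw] at this
    rw [this, ← hx]

lemma q3a (x : X) (h : ¬ qRel a b (iota (inl x)) (inl none)) :
    ∃ y, qRel a b (iota (inl x)) (iota (inr y)) := by
  rcases partner_l a x with hpt | ⟨y, hy⟩
  · exact absurd (Or.inl ((phiRel_iota_inl_none a.1.r (inl x)).2 hpt)) h
  · have hA : phiRel a.1.r (inl (some x)) (inr (some y)) :=
      Or.inl ⟨inl x, inr y, rfl, rfl, hy, not_pt_of_rel hy (by simp)⟩
    rcases partner_l b y with hpt | ⟨y', hy'⟩
    · have hB : phiRel b.1.r (inl (some y)) (inr none) :=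
        Or.inr ⟨(inExtra_iota b.1.r (inl y)).2 hpt, trivial⟩
      have hq : qRel a b (iota (inl x)) (inr none) := ⟨some y, some y, hA, Jrel.rfl, hB⟩
      exact absurd ((q_equiv a b).trans hq ((q_equiv a b).symm (q_none_none a b)))
        h
    · have hB : phiRel b.1.r (inl (some y)) (inr (some y')) :=
        Or.inl ⟨inl y, inr y', rfl, rfl, hy', not_pt_of_rel hy' (by simp)⟩
      exact ⟨y', ⟨some y, some y, hA, Jrel.rfl, hB⟩⟩

lemma q3b (x : X) (h : ¬ qRel a b (iota (inr x)) (inl none)) :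
    ∃ y, qRel a b (iota (inr x)) (iota (inl y)) := by
  rcases partner_r b x with hpt | ⟨y, hy⟩
  · have hB : phiRel b.1.r (inr (some x)) (inr none) :=
      Or.inr ⟨(inExtra_iota b.1.r (inr x)).2 hpt, trivial⟩
    have hq : qRel a b (iota (inr x)) (inr none) := Or.inl hB
    exact absurd ((q_equiv a b).trans hq ((q_equiv a b).symm (q_none_none a b))) h
  · have hB : phiRel b.1.r (inl (some y)) (inr (some x)) :=
      Or.inl ⟨inl y, inr x, rfl, rfl, b.1.iseqv.symm hy, not_pt_of_rel (b.1.iseqv.symm hy) (by simp)⟩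
    rcases partner_r a y with hpt | ⟨v, hv⟩
    · have hA : phiRel a.1.r (inl none) (inr (some y)) :=
        Or.inr ⟨trivial, (inExtra_iota a.1.r (inr y)).2 hpt⟩
      have hq : qRel a b (inl none) (iota (inr x)) := ⟨some y, some y, hA, Jrel.rfl, hB⟩
      exact absurd ((q_equiv a b).symm hq) h
    · have hA : phiRel a.1.r (inl (some v)) (inr (some y)) :=
        Or.inl ⟨inl v, inr y, rfl, rfl, a.1.iseqv.symm hv, not_pt_of_rel (a.1.iseqv.symm hv) (by simp)⟩
      have hq : qRel a b (iota (inl v)) (iota (inr x)) := ⟨some y, some y, hA, Jrel.rfl, hB⟩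
      exact ⟨v, (q_equiv a b).symm hq⟩

def mulRel : SRel X := pb (qRel a b)

lemma mulRel_equiv : Equivalence (mulRel a b) := by
  have hq := q_equiv a b
  constructor
  · intro z; exact Or.inl rfl
  · rintro z w (rfl | ⟨h, hn⟩)
    · exact Or.inl rfl
    · exact Or.inr ⟨hq.symm h, fun hc => hn (hq.trans h hc)⟩
  · rintro z w v (rfl | ⟨h, hn⟩) h'
    · exact h'
    · rcases h' with rfl | ⟨h', hn'⟩
      · exact Or.inr ⟨h, hn⟩
      · exact Or.inr ⟨hq.trans h h', hn⟩

lemma pt_mul_iff (z : X ⊕ X) :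
    IsPointOf (mulRel a b) z ↔ qRel a b (iota z) (inl none) := by
  constructor
  · intro hp
    by_contra hn
    rcases z with x | x
    · obtain ⟨y, hy⟩ := q3a a b x hn
      exact absurd (hp (inr y) (Or.inr ⟨hy, hn⟩)) (by simp)
    · obtain ⟨y, hy⟩ := q3b a b x hn
      exact absurd (hp (inl y) (Or.inr ⟨hy, hn⟩)) (by simp)
  · rintro h w (rfl | ⟨h', hn'⟩)
    · rfl
    · exact absurd h hn'

lemma mulRel_classes (z : X ⊕ X) :
    IsLine {y | mulRel a b z y} ∨ IsPoint {y | mulRel a b z y} := by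
  by_cases hq : qRel a b (iota z) (inl none)
  · right
    refine ⟨z, Set.ext fun y => ?_⟩
    simp only [Set.mem_setOf_eq, Set.mem_singleton_iff]
    constructor
    · intro h
      have := (pt_mul_iff a b z).2 hq
      exact this y h
    · rintro rfl
      exact Or.inl rfl
  · left
    rcases z with x | x
    · refine ⟨⟨x, Or.inl rfl⟩, ?_⟩
      obtain ⟨y, hy⟩ := q3a a b x hq
      exact ⟨y, Or.inr ⟨hy, hq⟩⟩
    · refine ⟨?_, ⟨x, Or.inl rfl⟩⟩
      obtain ⟨y, hy⟩ := q3b a b x hq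
      exact ⟨y, Or.inr ⟨hy, hq⟩⟩

def pipMul : PIP X := ⟨⟨mulRel a b, mulRel_equiv a b⟩, mulRel_classes a b⟩

lemma extra_mul_iff : ∀ u, InExtraBlock (mulRel a b) u ↔ qRel a b u (inl none)
  | inl none => iff_of_true trivial ((q_equiv a b).refl _)
  | inr none => iff_of_true trivial ((q_equiv a b).symm (q_none_none a b))
  | inl (some x) => pt_mul_iff a b (inl x)
  | inr (some x) => pt_mul_iff a b (inr x)

lemma not_none_iota {u : Option X ⊕ Option X} (h : ¬ qRel a b u (inl none)) :
    ∃ z, u = iota z := by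
  rcases u with (_ | x) | (_ | x)
  · exact absurd ((q_equiv a b).refl _) h
  · exact ⟨inl x, rfl⟩
  · exact absurd ((q_equiv a b).symm (q_none_none a b)) h
  · exact ⟨inr x, rfl⟩

lemma phi_mul : phiRel (mulRel a b) = qRel a b := by
  have hq := q_equiv a b
  funext u v
  apply propext
  constructor
  · rintro (⟨z, w, rfl, rfl, hm, hpt⟩ | ⟨h1, h2⟩)
    · rcases hm with rfl | ⟨h, _⟩
      · exact hq.refl _
      · exact h
    · exact hq.trans ((extra_mul_iff a b _).1 h1) (hq.symm ((extra_mul_iff a b _).1 h2))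
  · intro h
    by_cases hu : qRel a b u (inl none)
    · exact Or.inr ⟨(extra_mul_iff a b u).2 hu,
        (extra_mul_iff a b v).2 (hq.trans (hq.symm h) hu)⟩
    · obtain ⟨z, rfl⟩ := not_none_iota a b hu
      have hv : ¬ qRel a b v (inl none) := fun hc => hu (hq.trans h hc)
      obtain ⟨w, rfl⟩ := not_none_iota a b hv
      exact Or.inl ⟨z, w, rfl, rfl, Or.inr ⟨h, hu⟩,
        fun hc => hu ((pt_mul_iff a b z).1 hc)⟩

end Product

section Identity
variable {X : Type*}

def eRel : SRel X := fun z w => z = w ∨ z = Sum.swap w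

lemma eRel_equiv : Equivalence (eRel (X := X)) := by
  constructor
  · intro z; exact Or.inl rfl
  · rintro z w (rfl | rfl)
    · exact Or.inl rfl
    · exact Or.inr (Sum.swap_swap w).symm
  · rintro z w v (rfl | rfl) (rfl | h)
    · exact Or.inl rfl
    · exact Or.inr h
    · exact Or.inr rfl
    · rw [h, Sum.swap_swap]; exact Or.inl rfl

lemma eRel_line (z : X ⊕ X) : IsLine {y | eRel z y} := by
  rcases z with x | x
  · exact ⟨⟨x, Or.inl rfl⟩, ⟨x, Or.inr rfl⟩⟩
  · exact ⟨⟨x, Or.inr rfl⟩, ⟨x, Or.inl rfl⟩⟩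

def ePIP : PIP X := ⟨⟨eRel, eRel_equiv⟩, fun z => Or.inl (eRel_line z)⟩

def idO : SRel (Option X) := fun u v => u = v ∨ u = Sum.swap v

lemma not_pt_eRel (z : X ⊕ X) : ¬ IsPointOf (eRel (X := X)) z := by
  intro h
  have := h (Sum.swap z) (Or.inr (Sum.swap_swap z).symm)
  rcases z with x | x <;> simp at this

lemma swap_iota (w : X ⊕ X) : Sum.swap (iota w) = iota (Sum.swap w) := by
  rcases w with x | x <;> rfl

lemma phi_e : phiRel (eRel (X := X)) = idO := by
  funext u v
  apply propext
  constructor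
  · rintro (⟨z, w, rfl, rfl, h1, h2⟩ | ⟨h1, h2⟩)
    · rcases h1 with rfl | rfl
      · exact Or.inl rfl
      · exact Or.inr (swap_iota w).symm
    · rcases u with (_ | x) | (_ | x) <;> rcases v with (_ | y) | (_ | y) <;>
        first
          | exact Or.inl rfl
          | exact Or.inr rfl
          | exact absurd h1 (not_pt_eRel _)
          | exact absurd h2 (not_pt_eRel _)
  · rintro (rfl | rfl)
    · rcases u with (_ | x) | (_ | x)
      · exact Or.inr ⟨trivial, trivial⟩
      · exact Or.inl ⟨inl x, inl x, rfl, rfl, Or.inl rfl, not_pt_eRel _⟩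
      · exact Or.inr ⟨trivial, trivial⟩
      · exact Or.inl ⟨inr x, inr x, rfl, rfl, Or.inl rfl, not_pt_eRel _⟩
    · rcases v with (_ | x) | (_ | x)
      · exact Or.inr ⟨trivial, trivial⟩
      · exact Or.inl ⟨inr x, inl x, rfl, rfl, Or.inr rfl, not_pt_eRel _⟩
      · exact Or.inr ⟨trivial, trivial⟩
      · exact Or.inl ⟨inl x, inr x, rfl, rfl, Or.inr rfl, not_pt_eRel _⟩

end Identity

section IdLaws
variable {X : Type*} {s : SRel (Option X)}

lemma idO_inr_inr {c d : Option X} : idO (X := X) (inr c) (inr d) ↔ c = d := by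
  constructor
  · rintro (h | h)
    · exact inr.inj h
    · exact absurd h (by simp [Sum.swap])
  · rintro rfl; exact Or.inl rfl

lemma idO_inl_inl {c d : Option X} : idO (X := X) (inl c) (inl d) ↔ c = d := by
  constructor
  · rintro (h | h)
    · exact inl.inj h
    · exact absurd h (by simp [Sum.swap])
  · rintro rfl; exact Or.inl rfl

lemma idO_inl_inr {c d : Option X} : idO (X := X) (inl c) (inr d) ↔ c = d := by
  constructor
  · rintro (h | h)
    · exact absurd h (by simp)
    · simp only [Sum.swap_inr] at h
      exact inl.inj h
  · rintro rfl; exact Or.inr rfl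

lemma idO_inr_inl {c d : Option X} : idO (X := X) (inr c) (inl d) ↔ c = d := by
  constructor
  · rintro (h | h)
    · exact absurd h (by simp)
    · simp only [Sum.swap_inl] at h
      exact inr.inj h
  · rintro rfl; exact Or.inr rfl

lemma J_idO_s (hs : Equivalence s) {c d : Option X} :
    Jrel idO s c d ↔ s (inl c) (inl d) := by
  constructor
  · intro h
    induction h with
    | refl => exact hs.refl _
    | tail h' step ih =>
      rcases step with hstep | hstep
      · exact hs.trans ih hstep
      · rw [← idO_inr_inr.1 hstep]; exact ih
  · exact fun h => Jrel.of_s h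

lemma J_s_idO (hs : Equivalence s) {c d : Option X} :
    Jrel s idO c d ↔ s (inr c) (inr d) := by
  constructor
  · intro h
    induction h with
    | refl => exact hs.refl _
    | tail h' step ih =>
      rcases step with hstep | hstep
      · rw [← idO_inl_inl.1 hstep]; exact ih
      · exact hs.trans ih hstep
  · exact fun h => Jrel.of_r h

lemma clean_idO_left (hs : Equivalence s) : cleanProd idO s = s := by
  funext u v
  apply propext
  rcases u with x | x <;> rcases v with y | y
  · constructor
    · rintro (h | ⟨c, d, h1, hJ, h3⟩)
      · rw [idO_inl_inl.1 h]; exact hs.refl _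
      · obtain rfl := idO_inl_inr.1 h1
        obtain rfl := idO_inr_inl.1 h3
        exact (J_idO_s hs).1 hJ
    · intro h
      exact Or.inr ⟨x, y, idO_inl_inr.2 rfl, (J_idO_s hs).2 h, idO_inr_inl.2 rfl⟩
  · constructor
    · rintro ⟨c, d, h1, hJ, h3⟩
      obtain rfl := idO_inl_inr.1 h1
      exact hs.trans ((J_idO_s hs).1 hJ) h3
    · intro h
      exact ⟨x, x, idO_inl_inr.2 rfl, Jrel.rfl, h⟩
  · constructor
    · rintro ⟨c, d, h1, hJ, h3⟩
      obtain rfl := idO_inl_inr.1 h1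
      exact hs.symm (hs.trans ((J_idO_s hs).1 hJ) h3)
    · intro h
      exact ⟨y, y, idO_inl_inr.2 rfl, Jrel.rfl, hs.symm h⟩
  · constructor
    · rintro (h | ⟨c, d, h1, hJ, h3⟩)
      · exact h
      · exact hs.trans h1 (hs.trans ((J_idO_s hs).1 hJ) h3)
    · exact fun h => Or.inl h

lemma clean_idO_right (hs : Equivalence s) : cleanProd s idO = s := by
  funext u v
  apply propext
  rcases u with x | x <;> rcases v with y | y
  · constructor
    · rintro (h | ⟨c, d, h1, hJ, h3⟩)
      · exact h
      · exact hs.trans h1 (hs.trans ((J_s_idO hs).1 hJ) h3)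
    · exact fun h => Or.inl h
  · constructor
    · rintro ⟨c, d, h1, hJ, h3⟩
      obtain rfl := idO_inl_inr.1 h3
      exact hs.trans h1 ((J_s_idO hs).1 hJ)
    · intro h
      exact ⟨y, y, h, Jrel.rfl, idO_inl_inr.2 rfl⟩
  · constructor
    · rintro ⟨c, d, h1, hJ, h3⟩
      obtain rfl := idO_inl_inr.1 h3
      exact hs.symm (hs.trans h1 ((J_s_idO hs).1 hJ))
    · intro h
      exact ⟨x, x, hs.symm h, Jrel.rfl, idO_inl_inr.2 rfl⟩
  · constructor
    · rintro (h | ⟨c, d, h1, hJ, h3⟩)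
      · rw [idO_inr_inr.1 h]; exact hs.refl _
      · obtain rfl := idO_inr_inl.1 h1
        obtain rfl := idO_inl_inr.1 h3
        exact (J_s_idO hs).1 hJ
    · intro h
      exact Or.inr ⟨x, y, idO_inr_inl.2 rfl, (J_s_idO hs).2 h, idO_inl_inr.2 rfl⟩
end IdLaws

section Final
variable {X : Type*}

lemma not_pt_of_line {r : SRel X} {z : X ⊕ X} (h : IsLine {y | r z y}) : ¬ IsPointOf r z := by
  obtain ⟨⟨x0, h0⟩, ⟨x1, h1⟩⟩ := h
  intro hp
  rcases z with x | x
  · exact absurd (hp _ h1) (by simp)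
  · exact absurd (hp _ h0) (by simp)

lemma isPointOf_of_isPoint {r : SRel X} (hr : Equivalence r) {z : X ⊕ X}
    (h : IsPoint {y | r z y}) : IsPointOf r z := by
  obtain ⟨w, hw⟩ := h
  have hz : z ∈ {y | r z y} := hr.refl z
  rw [hw] at hz
  intro w' hw'
  have hmem : w' ∈ {y | r z y} := hw'
  rw [hw] at hmem
  rw [hmem, ← hz]

variable {r : SRel X}

lemma phi_ll_none (hp : ∀ z, ¬ IsPointOf r z) {c d : Option X}
    (h : phiRel r (inl c) (inl d)) : c = none ↔ d = none := by
  rcases h with ⟨z, w, hz, hw, _, _⟩ | ⟨h1, h2⟩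
  · rcases z with x | x <;> rcases w with y | y <;> simp [Sum.map] at hz hw <;> simp [hz, hw]
  · rcases c with _ | x
    · rcases d with _ | y
      · simp
      · exact absurd h2 (hp _)
    · exact absurd h1 (hp _)

lemma phi_rr_none (hp : ∀ z, ¬ IsPointOf r z) {c d : Option X}
    (h : phiRel r (inr c) (inr d)) : c = none ↔ d = none := by
  rcases h with ⟨z, w, hz, hw, _, _⟩ | ⟨h1, h2⟩
  · rcases z with x | x <;> rcases w with y | y <;> simp [Sum.map] at hz hw <;> simp [hz, hw]
  · rcases c with _ | x
    · rcases d with _ | y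
      · simp
      · exact absurd h2 (hp _)
    · exact absurd h1 (hp _)

lemma phi_some_inl_none (hp : ∀ z, ¬ IsPointOf r z) {x : X}
    (h : phiRel r (inl (some x)) (inl none)) : False := by
  rcases h with ⟨z, w, hz, hw, _, _⟩ | ⟨h1, _⟩
  · rcases w with y | y <;> simp [Sum.map] at hw
  · exact absurd h1 (hp _)

lemma phi_inr_inl_none (hp : ∀ z, ¬ IsPointOf r z) {d : Option X}
    (h : phiRel r (inr d) (inl none)) : d = none := by
  rcases h with ⟨z, w, hz, hw, _, _⟩ | ⟨h1, _⟩
  · rcases w with y | y <;> simp [Sum.map] at hw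
  · rcases d with _ | y
    · rfl
    · exact absurd h1 (hp _)

lemma phi_some_inr (hp : ∀ z, ¬ IsPointOf r z) {x : X} {c : Option X}
    (h : phiRel r (inl (some x)) (inr c)) : ∃ y, c = some y := by
  rcases h with ⟨z, w, hz, hw, _, _⟩ | ⟨h1, _⟩
  · rcases w with y | y <;> simp [Sum.map] at hw
    exact ⟨y, hw⟩
  · exact absurd h1 (hp _)

lemma phi_none_inr (hp : ∀ z, ¬ IsPointOf r z) {c : Option X}
    (h : phiRel r (inl none) (inr c)) : c = none := by
  rcases h with ⟨z, w, hz, hw, _, _⟩ | ⟨_, h2⟩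
  · rcases z with y | y <;> simp [Sum.map] at hz
  · rcases c with _ | y
    · rfl
    · exact absurd h2 (hp _)

lemma phi_inl_inr_some (hp : ∀ z, ¬ IsPointOf r z) {x : X} {d : Option X}
    (h : phiRel r (inl d) (inr (some x))) : ∃ y, d = some y := by
  rcases h with ⟨z, w, hz, hw, _, _⟩ | ⟨_, h2⟩
  · rcases z with y | y <;> simp [Sum.map] at hz
    exact ⟨y, hz⟩
  · exact absurd h2 (hp _)

lemma J_none_right (a b : PIP X) (hpa : ∀ z, ¬ IsPointOf a.1.r z)
    (hpb : ∀ z, ¬ IsPointOf b.1.r z) :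
    ∀ {c d : Option X}, Jrel (phiRel a.1.r) (phiRel b.1.r) c d → c = none → d = none := by
  intro c d h
  induction h with
  | refl => exact id
  | tail h' step ih =>
    intro hc
    rcases step with hstep | hstep
    · exact (phi_ll_none hpb hstep).1 (ih hc)
    · exact (phi_rr_none hpa hstep).1 (ih hc)

lemma J_none_left (a b : PIP X) (hpa : ∀ z, ¬ IsPointOf a.1.r z)
    (hpb : ∀ z, ¬ IsPointOf b.1.r z) {c d : Option X}
    (h : Jrel (phiRel a.1.r) (phiRel b.1.r) c d) (hd : d = none) : c = none :=
  J_none_right a b hpa hpb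
    (h.symm (phiRel_equiv a.1.iseqv) (phiRel_equiv b.1.iseqv)) hd

lemma mul_no_pt (a b : PIP X) (hpa : ∀ z, ¬ IsPointOf a.1.r z)
    (hpb : ∀ z, ¬ IsPointOf b.1.r z) (z : X ⊕ X) :
    ¬ qRel a b (iota z) (inl none) := by
  rcases z with x | x
  · rintro (hA | ⟨c, d, h1, hJ, h3⟩)
    · exact phi_some_inl_none hpa hA
    · have hd : d = none := phi_inr_inl_none hpa h3
      have hc : c = none := J_none_left a b hpa hpb hJ hd
      obtain ⟨y, hy⟩ := phi_some_inr hpa h1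
      rw [hc] at hy
      exact (Option.some_ne_none y) hy.symm
  · rintro ⟨c, d, h1, hJ, h3⟩
    have hc : c = none := phi_none_inr hpa h1
    have hd : d = none := J_none_right a b hpa hpb hJ hc
    obtain ⟨y, hy⟩ := phi_inl_inr_some hpb h3
    rw [hd] at hy
    exact (Option.some_ne_none y) hy.symm

lemma pip_ext {a b : PIP X} (h : a.1.r = b.1.r) : a = b :=
  Subtype.ext (Setoid.ext fun x y => by rw [h])

lemma mul_assoc' (a b c : PIP X) : pipMul (pipMul a b) c = pipMul a (pipMul b c) := by
  apply pip_ext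
  show pb (cleanProd (phiRel ((pipMul a b).1.r)) (phiRel c.1.r)) =
    pb (cleanProd (phiRel a.1.r) (phiRel ((pipMul b c).1.r)))
  rw [show phiRel ((pipMul a b).1.r) = cleanProd (phiRel a.1.r) (phiRel b.1.r) from
      phi_mul a b,
    show phiRel ((pipMul b c).1.r) = cleanProd (phiRel b.1.r) (phiRel c.1.r) from
      phi_mul b c,
    clean_assoc (phiRel_equiv a.1.iseqv) (phiRel_equiv b.1.iseqv) (phiRel_equiv c.1.iseqv)]

lemma one_mul' (a : PIP X) : pipMul ePIP a = a := by
  apply pip_ext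
  show pb (cleanProd (phiRel (ePIP.1.r)) (phiRel a.1.r)) = a.1.r
  rw [show phiRel (ePIP.1.r) = idO from phi_e, clean_idO_left (phiRel_equiv a.1.iseqv),
    pb_phi]

lemma mul_one' (a : PIP X) : pipMul a ePIP = a := by
  apply pip_ext
  show pb (cleanProd (phiRel a.1.r) (phiRel (ePIP.1.r))) = a.1.r
  rw [show phiRel (ePIP.1.r) = idO from phi_e, clean_idO_right (phiRel_equiv a.1.iseqv),
    pb_phi]

def pipMonoid (X : Type*) : Monoid (PIP X) :=
  { mul := pipMul
    one := ePIP
    mul_assoc := mul_assoc'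
    one_mul := one_mul'
    mul_one := mul_one' }

end Final


/-- With the multiplication `a·b = φ⁻¹(φ(a)·φ(b))`, `PIP_X` is a monoid
containing `IP_X` (the elements all of whose classes are lines) as a
submonoid. -/
theorem pip_monoid_contains_ip (X : Type*) :
    ∃ _ : Monoid (PIP X),
      (∀ a b : PIP X,
        phiRel ((a * b).1.r) = prodRel (phiRel a.1.r) (phiRel b.1.r)) ∧
      (∃ T : Submonoid (PIP X),
        (T : Set (PIP X)) = {a : PIP X | ∀ x, IsLine {y | a.1.r x y}}) := by
  letI M : Monoid (PIP X) := pipMonoid X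
  refine ⟨M, fun a b => ?_, ?_⟩
  · show phiRel ((pipMul a b).1.r) = prodRel (phiRel a.1.r) (phiRel b.1.r)
    rw [prod_eq_clean (phiRel_equiv a.1.iseqv) (phiRel_equiv b.1.iseqv)]
    exact phi_mul a b
  · refine ⟨⟨⟨{a : PIP X | ∀ x, IsLine {y | a.1.r x y}}, ?_⟩, ?_⟩, rfl⟩
    · rintro a b ha hb z
      rcases mulRel_classes a b z with h | h
      · exact h
      · exfalso
        have hpt := isPointOf_of_isPoint (mulRel_equiv a b) h
        have hq := (pt_mul_iff a b z).1 hpt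
        exact mul_no_pt a b (fun w => not_pt_of_line (ha w)) (fun w => not_pt_of_line (hb w))
          z hq
    · exact fun z => eRel_line z
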